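/- In a 5-regular graph G with a red/blue coloring, let M be the set of miscolored vertices: red vertices with at least 3 blue neighbors together with blue vertices with at least 3 red neighbors. Then the bipartite graph induced between the miscolored red vertices and the miscolored blue vertices has maximum degree at most 5, and if I is a bihole of this bipartite graph of size m + m, swapping all vertices of I preserves the balance of a bisection (the sizes of the two color classes are unchanged) and decreases the cut by at least 2m. -/

import Mathlib

open SimpleGraph Finset

variable {V : Type*}

/-- The number of bichromatic edges of `G` under the red/blue coloring `c`
(`true` = red, `false` = blue). -/
def cutB [Fintype V] [DecidableEq V] (G : SimpleGraph V) [DecidableRel G.Adj]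
    (c : V → Bool) : ℕ :=
  (G.edgeFinset.filter (fun e => ¬ (e.map c).IsDiag)).card

/-- The number of neighbors of `v` having color `b`. -/
def nbrColor [Fintype V] [DecidableEq V] (G : SimpleGraph V) [DecidableRel G.Adj]
    (c : V → Bool) (b : Bool) (v : V) : ℕ :=
  ((G.neighborFinset v).filter (fun w => c w = b)).card

section aux
variable [Fintype V] [DecidableEq V] (G : SimpleGraph V) [DecidableRel G.Adj]

def bgr (c : V → Bool) : SimpleGraph V where
  Adj u v := G.Adj u v ∧ c u ≠ c v
  symm := ⟨fun _ _ h => ⟨h.1.symm, h.2.symm⟩⟩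
  loopless := ⟨fun v h => G.loopless.irrefl v h.1⟩

instance (c : V → Bool) : DecidableRel (bgr G c).Adj := fun _ _ =>
  inferInstanceAs (Decidable (_ ∧ _))

lemma sumF (c : V → Bool) :
    ∑ v, ∑ w, (if G.Adj v w ∧ ¬ c w = c v then 1 else 0) = 2 * cutB G c := by
  have h1 : ∀ v, (bgr G c).degree v
      = ∑ w, (if G.Adj v w ∧ ¬ c w = c v then 1 else 0) := by
    intro v
    rw [← card_neighborFinset_eq_degree, neighborFinset_eq_filter, Finset.card_filter]
    exact Finset.sum_congr rfl fun w _ => if_congr (by simp [bgr]; tauto) rfl rfl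
  have h2 : (bgr G c).edgeFinset = G.edgeFinset.filter (fun e => ¬ (e.map c).IsDiag) := by
    ext e
    induction e using Sym2.ind with
    | _ u v => rw [mem_edgeFinset]; simp [bgr, mem_edgeFinset]
  calc ∑ v, ∑ w, (if G.Adj v w ∧ ¬ c w = c v then 1 else 0)
      = ∑ v, (bgr G c).degree v := by simp [h1]
    _ = 2 * (bgr G c).edgeFinset.card := SimpleGraph.sum_degrees_eq_twice_card_edges _
    _ = 2 * cutB G c := by rw [h2]; rfl

lemma nbr_sum (c : V → Bool) (b : Bool) (v : V) :
    nbrColor G c b v = ∑ w, (if G.Adj v w ∧ c w = b then 1 else 0) := by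
  rw [nbrColor, neighborFinset_eq_filter, Finset.filter_filter, Finset.card_filter]

end aux

/-- In a 5-regular graph with coloring `c`, the bipartite graph between the
miscolored red vertices (red with at least 3 blue neighbors) and the miscolored
blue vertices has maximum degree at most 5; and swapping the vertices of a
bihole of size `m + m` which is independent in `G` keeps the sizes of the color
classes unchanged and decreases the cut by at least `2m`. -/
theorem stmt14 [Fintype V] [DecidableEq V] (G : SimpleGraph V) [DecidableRel G.Adj]
    (hreg : G.IsRegularOfDegree 5) (c : V → Bool)
    (MR MB : Finset V)
    (hMR : MR = Finset.univ.filter (fun v => c v = true ∧ 3 ≤ nbrColor G c false v))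
    (hMB : MB = Finset.univ.filter (fun v => c v = false ∧ 3 ≤ nbrColor G c true v))
    (I : Finset V) (m : ℕ) (hI : I ⊆ MR ∪ MB)
    (hIR : (I ∩ MR).card = m) (hIB : (I ∩ MB).card = m)
    (hind : ∀ u ∈ I, ∀ w ∈ I, ¬ G.Adj u w) :
    (∀ v ∈ MR, (G.neighborFinset v ∩ MB).card ≤ 5) ∧
    (∀ v ∈ MB, (G.neighborFinset v ∩ MR).card ≤ 5) ∧
    (Finset.univ.filter (fun v => (if v ∈ I then !(c v) else c v) = true)).card
      = (Finset.univ.filter (fun v => c v = true)).card ∧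
    cutB G (fun v => if v ∈ I then !(c v) else c v) + 2 * m ≤ cutB G c := by
  set c' : V → Bool := fun v => if v ∈ I then !(c v) else c v with hc'
  -- degree bounds
  have hdeg : ∀ v (S : Finset V), (G.neighborFinset v ∩ S).card ≤ 5 := by
    intro v S
    calc (G.neighborFinset v ∩ S).card ≤ (G.neighborFinset v).card :=
          Finset.card_le_card Finset.inter_subset_left
      _ = 5 := by rw [card_neighborFinset_eq_degree]; exact hreg v
  refine ⟨fun v _ => hdeg v MB, fun v _ => hdeg v MR, ?_, ?_⟩
  -- identify I ∩ MR and I ∩ MB with color filters on I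
  · have hfR : I.filter (fun v => c v = true) = I ∩ MR := by
      ext v
      simp only [Finset.mem_filter, Finset.mem_inter, hMR, Finset.mem_univ, true_and]
      constructor
      · rintro ⟨hv, hcv⟩
        refine ⟨hv, hcv, ?_⟩
        rcases Finset.mem_union.mp (hI hv) with h | h
        · rw [hMR] at h; exact (Finset.mem_filter.mp h).2.2
        · rw [hMB] at h; simp [(Finset.mem_filter.mp h).2.1] at hcv
      · rintro ⟨hv, hcv, _⟩; exact ⟨hv, hcv⟩
    have hfB : I.filter (fun v => c v = false) = I ∩ MB := by
      ext v
      simp only [Finset.mem_filter, Finset.mem_inter, hMB, Finset.mem_univ, true_and]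
      constructor
      · rintro ⟨hv, hcv⟩
        refine ⟨hv, hcv, ?_⟩
        rcases Finset.mem_union.mp (hI hv) with h | h
        · rw [hMR] at h; simp [(Finset.mem_filter.mp h).2.1] at hcv
        · rw [hMB] at h; exact (Finset.mem_filter.mp h).2.2
      · rintro ⟨hv, hcv, _⟩; exact ⟨hv, hcv⟩
    have e1 : ∀ (d : V → Bool), (Finset.univ.filter (fun v => d v = true)).card
        = ∑ v ∈ I, (if d v = true then 1 else 0)
          + ∑ v ∈ Iᶜ, (if d v = true then 1 else 0) := by
      intro d
      rw [Finset.card_filter, ← Finset.sum_add_sum_compl I]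
    rw [e1 c', e1 c]
    have h2 : ∑ v ∈ Iᶜ, (if c' v = true then 1 else 0)
        = ∑ v ∈ Iᶜ, (if c v = true then 1 else 0) := by
      apply Finset.sum_congr rfl
      intro v hv
      have : v ∉ I := Finset.mem_compl.mp hv
      simp [hc', this]
    have h3 : ∑ v ∈ I, (if c' v = true then 1 else 0)
        = ∑ v ∈ I, (if c v = true then 1 else 0) := by
      have l1 : ∑ v ∈ I, (if c' v = true then 1 else 0)
          = (I.filter (fun v => c v = false)).card := by
        rw [Finset.card_filter]
        apply Finset.sum_congr rfl
        intro v hv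
        exact if_congr (by simp [hc', hv]) rfl rfl
      have l2 : ∑ v ∈ I, (if c v = true then 1 else 0)
          = (I.filter (fun v => c v = true)).card := by rw [Finset.card_filter]
      rw [l1, l2, hfR, hfB, hIR, hIB]
    rw [h2, h3]
  -- cut inequality
  · have key : 2 * cutB G c' + 2 * (2 * m) ≤ 2 * cutB G c := by
      rw [← sumF, ← sumF]
      -- |I| = 2 m
      have hI2 : I.card = 2 * m := by
        have hdisj : Disjoint (I ∩ MR) (I ∩ MB) := by
          rw [Finset.disjoint_left]
          intro a ha hb
          rw [hMR] at ha; rw [hMB] at hb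
          have h1 := (Finset.mem_filter.mp (Finset.mem_inter.mp ha).2).2.1
          have h2 := (Finset.mem_filter.mp (Finset.mem_inter.mp hb).2).2.1
          rw [h1] at h2; exact Bool.noConfusion h2
        have : I = (I ∩ MR) ∪ (I ∩ MB) := by
          rw [← Finset.inter_union_distrib_left, Finset.inter_eq_left.mpr hI]
        rw [this, Finset.card_union_of_disjoint hdisj, hIR, hIB]; omega
      -- per-vertex facts for v ∈ I
      have hhet : ∀ v ∈ I, 3 ≤ ((G.neighborFinset v).filter (fun w => ¬ c w = c v)).card
          ∧ ((G.neighborFinset v).filter (fun w => c w = c v)).card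
            + ((G.neighborFinset v).filter (fun w => ¬ c w = c v)).card = 5 := by
        intro v hv
        constructor
        · rcases Finset.mem_union.mp (hI hv) with h | h
          · rw [hMR] at h
            obtain ⟨_, hcv, h3⟩ := Finset.mem_filter.mp h
            refine le_trans h3 (Finset.card_le_card ?_)
            intro w hw
            have := Finset.mem_filter.mp hw
            exact Finset.mem_filter.mpr ⟨this.1, by rw [hcv, this.2]; simp⟩
          · rw [hMB] at h
            obtain ⟨_, hcv, h3⟩ := Finset.mem_filter.mp h
            refine le_trans h3 (Finset.card_le_card ?_)
            intro w hw
            have := Finset.mem_filter.mp hw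
            exact Finset.mem_filter.mpr ⟨this.1, by rw [hcv, this.2]; simp⟩
        · rw [Finset.card_filter_add_card_filter_not,
            card_neighborFinset_eq_degree]
          exact hreg v
      -- split double sums over I / Iᶜ
      have split : ∀ (d : V → Bool),
          ∑ v, ∑ w, (if G.Adj v w ∧ ¬ d w = d v then 1 else 0)
          = (∑ v ∈ I, ∑ w ∈ I, (if G.Adj v w ∧ ¬ d w = d v then 1 else 0)
              + ∑ v ∈ I, ∑ w ∈ Iᶜ, (if G.Adj v w ∧ ¬ d w = d v then 1 else 0))
            + (∑ v ∈ Iᶜ, ∑ w ∈ I, (if G.Adj v w ∧ ¬ d w = d v then 1 else 0)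
              + ∑ v ∈ Iᶜ, ∑ w ∈ Iᶜ, (if G.Adj v w ∧ ¬ d w = d v then 1 else 0)) := by
        intro d
        rw [← Finset.sum_add_sum_compl I]
        congr 1 <;> rw [← Finset.sum_add_distrib] <;>
          exact Finset.sum_congr rfl fun v _ => (Finset.sum_add_sum_compl I _).symm
      rw [split c', split c]
      -- II terms vanish
      have hII : ∀ (d : V → Bool),
          ∑ v ∈ I, ∑ w ∈ I, (if G.Adj v w ∧ ¬ d w = d v then 1 else 0) = 0 := by
        intro d
        apply Finset.sum_eq_zero; intro v hv
        apply Finset.sum_eq_zero; intro w hw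
        simp [hind v hv w hw]
      -- OO terms equal
      have hOO : ∑ v ∈ Iᶜ, ∑ w ∈ Iᶜ, (if G.Adj v w ∧ ¬ c' w = c' v then 1 else 0)
          = ∑ v ∈ Iᶜ, ∑ w ∈ Iᶜ, (if G.Adj v w ∧ ¬ c w = c v then 1 else 0) := by
        apply Finset.sum_congr rfl; intro v hv
        apply Finset.sum_congr rfl; intro w hw
        have hv' : v ∉ I := Finset.mem_compl.mp hv
        have hw' : w ∉ I := Finset.mem_compl.mp hw
        simp [hc', hv', hw']
      -- IO inequality (v ∈ I, w ∈ Iᶜ)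
      have hIO : ∑ v ∈ I, ∑ w ∈ Iᶜ, (if G.Adj v w ∧ ¬ c' w = c' v then 1 else 0) + I.card
          ≤ ∑ v ∈ I, ∑ w ∈ Iᶜ, (if G.Adj v w ∧ ¬ c w = c v then 1 else 0) := by
        have := Finset.sum_le_sum (s := I)
          (f := fun v => ∑ w ∈ Iᶜ, (if G.Adj v w ∧ ¬ c' w = c' v then 1 else 0) + 1)
          (g := fun v => ∑ w ∈ Iᶜ, (if G.Adj v w ∧ ¬ c w = c v then 1 else 0)) ?_
        · rw [Finset.sum_add_distrib] at this; simpa using this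
        intro v hv
        obtain ⟨h3, h5⟩ := hhet v hv
        -- inner(c') ≤ mono(v)
        have ha : ∑ w ∈ Iᶜ, (if G.Adj v w ∧ ¬ c' w = c' v then 1 else 0)
            ≤ ((G.neighborFinset v).filter (fun w => c w = c v)).card := by
          have e : ∀ w ∈ Iᶜ, (if G.Adj v w ∧ ¬ c' w = c' v then 1 else 0)
              = (if G.Adj v w ∧ c w = c v then (1:ℕ) else 0) := by
            intro w hw
            have hw' : w ∉ I := Finset.mem_compl.mp hw
            refine if_congr (and_congr_right fun _ => ?_) rfl rfl
            simp only [hc', hv, hw', if_true, if_false, if_pos, if_neg]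
            cases c w <;> cases c v <;> simp
          rw [Finset.sum_congr rfl e]
          calc ∑ w ∈ Iᶜ, (if G.Adj v w ∧ c w = c v then (1:ℕ) else 0)
              ≤ ∑ w, (if G.Adj v w ∧ c w = c v then (1:ℕ) else 0) :=
                Finset.sum_le_sum_of_subset (Finset.subset_univ _)
            _ = ((G.neighborFinset v).filter (fun w => c w = c v)).card := by
                rw [neighborFinset_eq_filter, Finset.filter_filter, Finset.card_filter]
        -- inner(c) = het(v)
        have hb : ∑ w ∈ Iᶜ, (if G.Adj v w ∧ ¬ c w = c v then 1 else 0)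
            = ((G.neighborFinset v).filter (fun w => ¬ c w = c v)).card := by
          have : ∑ w ∈ I, (if G.Adj v w ∧ ¬ c w = c v then (1:ℕ) else 0) = 0 :=
            Finset.sum_eq_zero fun w hw => by simp [hind v hv w hw]
          have htot := Finset.sum_add_sum_compl I
            (fun w => if G.Adj v w ∧ ¬ c w = c v then (1:ℕ) else 0)
          rw [this, zero_add] at htot
          rw [htot, neighborFinset_eq_filter, Finset.filter_filter, Finset.card_filter]
        omega
      -- OI inequality via symmetry
      have hOI : ∀ (d : V → Bool),
          ∑ v ∈ Iᶜ, ∑ w ∈ I, (if G.Adj v w ∧ ¬ d w = d v then 1 else 0)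
          = ∑ v ∈ I, ∑ w ∈ Iᶜ, (if G.Adj v w ∧ ¬ d w = d v then 1 else 0) := by
        intro d
        rw [Finset.sum_comm]
        apply Finset.sum_congr rfl; intro v _
        apply Finset.sum_congr rfl; intro w _
        exact if_congr (by constructor <;> rintro ⟨h1, h2⟩ <;>
          exact ⟨h1.symm, fun h => h2 h.symm⟩) rfl rfl
      rw [hII c', hII c, hOO, hOI c', hOI c, hI2] at *
      omega
    omega
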